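/- Define ζ : (0,1) → ℝ by ζ(z) = ((3/2)·ξ(z))^{2/3} (a real power, well defined since ξ(z) > 0). Then for every z ∈ (0,1), ζ is differentiable at z with derivative −√(1−z²)/(z·√(ζ(z))). -/

import Mathlib

open Real

private lemma aux_log_ineq (s : ℝ) (hs : s ∈ Set.Ioo (0:ℝ) 1) :
    2 * s < Real.log (1 + s) - Real.log (1 - s) := by
  set f : ℝ → ℝ := fun t => Real.log (1 + t) - Real.log (1 - t) - 2 * t with hf
  have hderiv : ∀ t ∈ Set.Ioo (-1:ℝ) 1,
      HasDerivAt f (1/(1+t) + 1/(1-t) - 2) t := by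
    intro t ht
    have h1 : (0:ℝ) < 1 + t := by linarith [ht.1]
    have h2 : (0:ℝ) < 1 - t := by linarith [ht.2]
    have d1 : HasDerivAt (fun t : ℝ => Real.log (1 + t)) (1/(1+t)) t := by
      have h : HasDerivAt (fun t : ℝ => 1 + t) 1 t := by
        simpa using (hasDerivAt_id t).const_add 1
      simpa using h.log h1.ne'
    have d2 : HasDerivAt (fun t : ℝ => Real.log (1 - t)) (-(1/(1-t))) t := by
      have h : HasDerivAt (fun t : ℝ => 1 - t) (-1) t := by
        simpa using (hasDerivAt_id t).const_sub 1
      have := h.log h2.ne'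
      simpa [neg_div] using this
    have d3 : HasDerivAt (fun t : ℝ => 2 * t) 2 t := by
      simpa using (hasDerivAt_id t).const_mul 2
    have := (d1.sub d2).sub d3
    refine this.congr_deriv ?_
    ring
  have hsub : Set.Ico (0:ℝ) 1 ⊆ Set.Ioo (-1:ℝ) 1 := fun x hx =>
    ⟨by linarith [hx.1], hx.2⟩
  have hmono : StrictMonoOn f (Set.Ico (0:ℝ) 1) := by
    apply strictMonoOn_of_deriv_pos (convex_Ico 0 1)
    · intro x hx
      exact ((hderiv x (hsub hx)).differentiableAt.continuousAt).continuousWithinAt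
    · intro x hx
      rw [interior_Ico] at hx
      rw [(hderiv x (hsub (Set.Ioo_subset_Ico_self hx))).deriv]
      have h1 : (0:ℝ) < 1 + x := by linarith [hx.1]
      have h2 : (0:ℝ) < 1 - x := by linarith [hx.2]
      have key : 1/(1+x) + 1/(1-x) - 2 = 2*x^2/((1+x)*(1-x)) := by
        field_simp
        ring
      rw [key]
      have hx0 : (0:ℝ) < x := hx.1
      exact div_pos (by nlinarith) (by nlinarith)
  have h0 : f 0 = 0 := by simp [hf]
  have := hmono (Set.mem_Ico.mpr ⟨le_refl 0, by norm_num⟩)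
    (Set.mem_Ico.mpr ⟨hs.1.le, hs.2⟩) hs.1
  rw [h0] at this
  simp only [hf] at this
  linarith

private lemma xi_pos (z : ℝ) (hz : z ∈ Set.Ioo (0:ℝ) 1) :
    0 < Real.log ((1 + Real.sqrt (1 - z^2)) / z) - Real.sqrt (1 - z^2) := by
  obtain ⟨hz0, hz1⟩ := hz
  have h1z : (0:ℝ) < 1 - z^2 := by nlinarith
  set s := Real.sqrt (1 - z^2) with hsdef
  have hs0 : 0 < s := Real.sqrt_pos.mpr h1z
  have hs2 : s^2 = 1 - z^2 := Real.sq_sqrt h1z.le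
  have hs1 : s < 1 := by
    have := Real.sqrt_lt_sqrt h1z.le (show 1 - z^2 < 1 by nlinarith)
    simpa using this
  have hlogz : 2 * Real.log z = Real.log (1 - s) + Real.log (1 + s) := by
    have : (1 - s) * (1 + s) = z^2 := by nlinarith
    rw [← Real.log_mul (by linarith) (by linarith), this]
    rw [show z^2 = z * z by ring, Real.log_mul hz0.ne' hz0.ne']
    ring
  have hkey := aux_log_ineq s ⟨hs0, hs1⟩
  rw [Real.log_div (by linarith) hz0.ne']
  linarith

/-- With `ξ(z) = log((1+√(1-z²))/z) - √(1-z²)` (positive on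
`(0,1)`) and `ζ(z) = ((3/2)·ξ(z))^{2/3}`, for every `z ∈ (0,1)` the function
`ζ` has derivative `-√(1-z²)/(z·√(ζ(z)))` at `z`. -/
theorem stmt7
    (xi zeta : ℝ → ℝ)
    (hxi : ∀ z ∈ Set.Ioo (0:ℝ) 1,
      xi z = Real.log ((1 + Real.sqrt (1 - z^2)) / z) - Real.sqrt (1 - z^2))
    (hzeta : ∀ z ∈ Set.Ioo (0:ℝ) 1,
      zeta z = ((3/2) * xi z) ^ ((2:ℝ)/3)) :
    ∀ z ∈ Set.Ioo (0:ℝ) 1,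
      HasDerivAt zeta (-Real.sqrt (1 - z^2) / (z * Real.sqrt (zeta z))) z := by
  intro z hz
  obtain ⟨hz0, hz1⟩ := hz
  have h1z : (0:ℝ) < 1 - z^2 := by nlinarith
  set s := Real.sqrt (1 - z^2) with hsdef
  have hs0 : 0 < s := Real.sqrt_pos.mpr h1z
  have hs2 : s^2 = 1 - z^2 := Real.sq_sqrt h1z.le
  have hmem : Set.Ioo (0:ℝ) 1 ∈ nhds z := isOpen_Ioo.mem_nhds ⟨hz0, hz1⟩
  have hxipos : 0 < xi z := by
    rw [hxi z ⟨hz0, hz1⟩]; exact xi_pos z ⟨hz0, hz1⟩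
  -- derivative of the sqrt part
  have d0 : HasDerivAt (fun w : ℝ => 1 - w^2) (-(2*z)) z := by
    simpa using (hasDerivAt_pow 2 z).const_sub 1
  have dsq : HasDerivAt (fun w : ℝ => Real.sqrt (1 - w^2)) (-(2*z) / (2*s)) z :=
    d0.sqrt h1z.ne'
  have dlog1 : HasDerivAt (fun w : ℝ => Real.log (1 + Real.sqrt (1 - w^2)))
      ((-(2*z) / (2*s)) / (1 + s)) z := by
    have h := (dsq.const_add 1).log (by positivity : (1:ℝ) + s ≠ 0)
    simpa using h
  have dlogz : HasDerivAt Real.log z⁻¹ z := Real.hasDerivAt_log hz0.ne'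
  have dF : HasDerivAt (fun w : ℝ =>
      Real.log (1 + Real.sqrt (1 - w^2)) - Real.log w - Real.sqrt (1 - w^2))
      (-s / z) z := by
    have h := (dlog1.sub dlogz).sub dsq
    refine (h.congr_deriv ?_)
    symm
    have h1s : (0:ℝ) < 1 + s := by linarith
    field_simp
    linear_combination (-s) * hs2
  have hxieq : xi =ᶠ[nhds z] fun w : ℝ =>
      Real.log (1 + Real.sqrt (1 - w^2)) - Real.log w - Real.sqrt (1 - w^2) := by
    filter_upwards [hmem] with w hw
    rw [hxi w hw, Real.log_div (by positivity) (ne_of_gt hw.1)]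
  have dxi : HasDerivAt xi (-s / z) z := dF.congr_of_eventuallyEq hxieq
  have dxi2 : HasDerivAt (fun w => (3/2 : ℝ) * xi w) ((3/2) * (-s / z)) z :=
    dxi.const_mul _
  have ha : (0:ℝ) < (3/2) * xi z := by linarith
  have drpow : HasDerivAt (fun w => ((3/2 : ℝ) * xi w) ^ ((2:ℝ)/3))
      (((3/2) * (-s / z)) * ((2:ℝ)/3) * ((3/2) * xi z) ^ ((2:ℝ)/3 - 1)) z :=
    dxi2.rpow_const (Or.inl ha.ne')
  have hzeq : zeta =ᶠ[nhds z] fun w => ((3/2 : ℝ) * xi w) ^ ((2:ℝ)/3) := by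
    filter_upwards [hmem] with w hw
    exact hzeta w hw
  have dz : HasDerivAt zeta
      (((3/2) * (-s / z)) * ((2:ℝ)/3) * ((3/2) * xi z) ^ ((2:ℝ)/3 - 1)) z :=
    drpow.congr_of_eventuallyEq hzeq
  convert dz using 1
  have hsqrt : Real.sqrt (zeta z) = ((3/2) * xi z) ^ ((1:ℝ)/3) := by
    rw [hzeta z ⟨hz0, hz1⟩, Real.sqrt_eq_rpow, ← Real.rpow_mul ha.le]
    norm_num
  rw [hsqrt]
  have h13 : (0:ℝ) < ((3/2) * xi z) ^ ((1:ℝ)/3) := Real.rpow_pos_of_pos ha _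
  have hexp : ((2:ℝ)/3 - 1) = -(1/3 : ℝ) := by norm_num
  rw [hexp, Real.rpow_neg ha.le]
  field_simp
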